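/- Let C be a reproducing normal cone in a Banach space X, and let h : X → X be continuous, positively homogeneous, and order-preserving with respect to C. Then h(C) ⊆ C, h(-C) ⊆ -C, and for every x ∈ X, limsup_k ‖h^k(x)‖^{1/k} ≤ max(r_C(h), r_{-C}(h)), where r_D(h) = sup_{y ∈ D} limsup_k ‖h^k(y)‖^{1/k}. Hence r_X(h) = max(r_C(h), r_{-C}(h)). -/

import Mathlib

open Set Filter Pointwise

/-- The cone spectral radius `r_D(h) = sup_{x ∈ D} limsup_k ‖h^k(x)‖^{1/k}`. -/
noncomputable def coneSpectralRadius {X : Type*} [NormedAddCommGroup X]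
    (D : Set X) (h : X → X) : ENNReal :=
  ⨆ (x : X) (_ : x ∈ D),
    Filter.limsup (fun k : ℕ => ENNReal.ofReal (‖h^[k] x‖ ^ ((k : ℝ)⁻¹))) atTop

set_option maxHeartbeats 1000000 in
theorem spectral_radius_on_X_eq_max
    {X : Type*} [NormedAddCommGroup X] [NormedSpace ℝ X] [CompleteSpace X]
    (C : Set X)
    (hclosed : IsClosed C) (hconv : Convex ℝ C)
    (hcone : ∀ t : ℝ, 0 ≤ t → ∀ x ∈ C, t • x ∈ C)
    (hpointed : ∀ x ∈ C, -x ∈ C → x = 0)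
    (M : ℝ) (hM : 0 < M)
    (hnormal : ∀ x y : X, x ∈ C → y - x ∈ C → ‖x‖ ≤ M * ‖y‖)
    (hrepro : ∀ x : X, ∃ y ∈ C, ∃ z ∈ C, x = y - z)
    (h : X → X) (hcont : Continuous h)
    (hhom : ∀ t : ℝ, 0 < t → ∀ x : X, h (t • x) = t • h x)
    (hmono : ∀ x y : X, y - x ∈ C → h y - h x ∈ C) :
    MapsTo h C C ∧ MapsTo h (-C) (-C) ∧
    (∀ x : X,
      Filter.limsup (fun k : ℕ => ENNReal.ofReal (‖h^[k] x‖ ^ ((k : ℝ)⁻¹))) atTop ≤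
        max (coneSpectralRadius C h) (coneSpectralRadius (-C) h)) ∧
    coneSpectralRadius (Set.univ : Set X) h =
      max (coneSpectralRadius C h) (coneSpectralRadius (-C) h) := by
  -- `C` is closed under addition
  have hadd : ∀ a ∈ C, ∀ b ∈ C, a + b ∈ C := by
    intro a ha b hb
    have h2 : (2 : ℝ) • ((1/2 : ℝ) • a + (1/2 : ℝ) • b) ∈ C := by
      refine hcone 2 (by norm_num) _ ?_
      exact hconv ha hb (by norm_num) (by norm_num) (by norm_num)
    have : (2 : ℝ) • ((1/2 : ℝ) • a + (1/2 : ℝ) • b) = a + b := by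
      rw [smul_add, smul_smul, smul_smul]; norm_num
    rwa [this] at h2
  -- `h 0 = 0`
  have h0 : h 0 = 0 := by
    have := hhom 2 (by norm_num) 0
    rw [smul_zero] at this
    have h1 : ((2:ℝ) - 1) • h 0 = 0 := by
      rw [sub_smul, one_smul, ← this, sub_self]
    norm_num at h1
    exact h1
  have hmapsC : MapsTo h C C := by
    intro x hx
    have := hmono 0 x (by simpa using hx)
    rwa [h0, sub_zero] at this
  have hmapsNC : MapsTo h (-C) (-C) := by
    intro x hx
    have hx' : -x ∈ C := Set.mem_neg.mp hx
    have := hmono x 0 (by simpa using hx')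
    rw [h0, zero_sub] at this
    exact Set.mem_neg.mpr this
  -- iterated monotonicity
  have hiter : ∀ (k : ℕ) (u v : X), v - u ∈ C → h^[k] v - h^[k] u ∈ C := by
    intro k
    induction k with
    | zero => intro u v huv; simpa using huv
    | succ n ih =>
      intro u v huv
      rw [Function.iterate_succ_apply', Function.iterate_succ_apply']
      exact hmono _ _ (ih u v huv)
  -- main bound
  have main : ∀ x : X,
      Filter.limsup (fun k : ℕ => ENNReal.ofReal (‖h^[k] x‖ ^ ((k : ℝ)⁻¹))) atTop ≤
        max (coneSpectralRadius C h) (coneSpectralRadius (-C) h) := by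
    intro x
    obtain ⟨y, hy, z, hz, hxyz⟩ := hrepro x
    set c : ℝ := M + 1 with hc
    have hc1 : (1 : ℝ) ≤ c := by simp [hc]; linarith
    have hc0 : (0 : ℝ) < 2 * c := by linarith
    -- key norm estimate
    have key : ∀ k : ℕ, ‖h^[k] x‖ ≤ (2 * c) * max ‖h^[k] y‖ ‖h^[k] (-z)‖ := by
      intro k
      have hA : h^[k] x - h^[k] (-z) ∈ C := by
        refine hiter k (-z) x ?_
        have : x - (-z) = y := by rw [hxyz]; abel
        rw [this]; exact hy
      have hBA : h^[k] y - h^[k] x ∈ C := by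
        refine hiter k x y ?_
        have : y - x = z := by rw [hxyz]; abel
        rw [this]; exact hz
      have hnorm : ‖h^[k] x - h^[k] (-z)‖ ≤ M * ‖h^[k] y - h^[k] (-z)‖ := by
        refine hnormal _ _ hA ?_
        have : h^[k] y - h^[k] (-z) - (h^[k] x - h^[k] (-z)) = h^[k] y - h^[k] x := by abel
        rw [this]; exact hBA
      have h1 : ‖h^[k] x‖ ≤ ‖h^[k] x - h^[k] (-z)‖ + ‖h^[k] (-z)‖ := by
        have := norm_add_le (h^[k] x - h^[k] (-z)) (h^[k] (-z))
        simpa using this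
      have h2 : ‖h^[k] y - h^[k] (-z)‖ ≤ ‖h^[k] y‖ + ‖h^[k] (-z)‖ := norm_sub_le _ _
      have h3 : ‖h^[k] x‖ ≤ (M + 1) * (‖h^[k] y‖ + ‖h^[k] (-z)‖) := by
        have hMy : (0:ℝ) ≤ ‖h^[k] (-z)‖ := norm_nonneg _
        nlinarith [norm_nonneg (h^[k] y)]
      calc ‖h^[k] x‖ ≤ (M + 1) * (‖h^[k] y‖ + ‖h^[k] (-z)‖) := h3
        _ ≤ (M + 1) * (2 * max ‖h^[k] y‖ ‖h^[k] (-z)‖) := by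
            have := le_max_left ‖h^[k] y‖ ‖h^[k] (-z)‖
            have := le_max_right ‖h^[k] y‖ ‖h^[k] (-z)‖
            nlinarith
        _ = (2 * c) * max ‖h^[k] y‖ ‖h^[k] (-z)‖ := by rw [hc]; ring
    -- sequences in ENNReal
    set F1 : ℕ → ENNReal := fun k => ENNReal.ofReal (‖h^[k] y‖ ^ ((k : ℝ)⁻¹)) with hF1
    set F2 : ℕ → ENNReal := fun k => ENNReal.ofReal (‖h^[k] (-z)‖ ^ ((k : ℝ)⁻¹)) with hF2
    set g : ℕ → ENNReal := fun k => ENNReal.ofReal ((2 * c) ^ ((k : ℝ)⁻¹)) with hg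
    have hgone : Tendsto g atTop (nhds 1) := by
      have h0' : Tendsto (fun k : ℕ => ((k:ℝ))⁻¹) atTop (nhds 0) :=
        tendsto_inv_atTop_zero.comp tendsto_natCast_atTop_atTop
      have hcontr : ContinuousAt (fun e : ℝ => (2*c) ^ e) 0 :=
        Real.continuousAt_const_rpow (ne_of_gt hc0)
      have : Tendsto (fun k : ℕ => (2*c) ^ ((k:ℝ)⁻¹)) atTop (nhds 1) := by
        have h2 := hcontr.tendsto.comp h0'
        simp only [Real.rpow_zero] at h2
        exact h2
      have := (ENNReal.continuous_ofReal.tendsto 1).comp this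
      simp only [ENNReal.ofReal_one] at this
      exact this
    have hlimsupg : Filter.limsup g atTop = 1 := hgone.limsup_eq
    -- pointwise bound
    have hptwise : ∀ k : ℕ,
        ENNReal.ofReal (‖h^[k] x‖ ^ ((k : ℝ)⁻¹)) ≤ (g * fun k => max (F1 k) (F2 k)) k := by
      intro k
      show _ ≤ g k * max (F1 k) (F2 k)
      have he : (0:ℝ) ≤ ((k:ℝ))⁻¹ := by positivity
      have hb1 : (0:ℝ) ≤ ‖h^[k] y‖ := norm_nonneg _
      have hb2 : (0:ℝ) ≤ ‖h^[k] (-z)‖ := norm_nonneg _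
      have hmax0 : (0:ℝ) ≤ max ‖h^[k] y‖ ‖h^[k] (-z)‖ := le_max_of_le_left hb1
      have step1 : ‖h^[k] x‖ ^ ((k:ℝ)⁻¹) ≤
          ((2*c) * max ‖h^[k] y‖ ‖h^[k] (-z)‖) ^ ((k:ℝ)⁻¹) :=
        Real.rpow_le_rpow (norm_nonneg _) (key k) he
      have step2 : ((2*c) * max ‖h^[k] y‖ ‖h^[k] (-z)‖) ^ ((k:ℝ)⁻¹) =
          (2*c) ^ ((k:ℝ)⁻¹) * (max ‖h^[k] y‖ ‖h^[k] (-z)‖) ^ ((k:ℝ)⁻¹) :=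
        Real.mul_rpow (le_of_lt hc0) hmax0
      have step3 : (max ‖h^[k] y‖ ‖h^[k] (-z)‖) ^ ((k:ℝ)⁻¹) ≤
          max (‖h^[k] y‖ ^ ((k:ℝ)⁻¹)) (‖h^[k] (-z)‖ ^ ((k:ℝ)⁻¹)) := by
        rcases le_total ‖h^[k] y‖ ‖h^[k] (-z)‖ with hle | hle
        · rw [max_eq_right hle]; exact le_max_right _ _
        · rw [max_eq_left hle]; exact le_max_left _ _
      have hreal : ‖h^[k] x‖ ^ ((k:ℝ)⁻¹) ≤
          (2*c) ^ ((k:ℝ)⁻¹) * max (‖h^[k] y‖ ^ ((k:ℝ)⁻¹)) (‖h^[k] (-z)‖ ^ ((k:ℝ)⁻¹)) := by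
        rw [step2] at step1
        exact step1.trans
          (mul_le_mul_of_nonneg_left step3 (Real.rpow_nonneg (le_of_lt hc0) _))
      calc ENNReal.ofReal (‖h^[k] x‖ ^ ((k:ℝ)⁻¹))
          ≤ ENNReal.ofReal ((2*c) ^ ((k:ℝ)⁻¹) *
              max (‖h^[k] y‖ ^ ((k:ℝ)⁻¹)) (‖h^[k] (-z)‖ ^ ((k:ℝ)⁻¹))) :=
            ENNReal.ofReal_le_ofReal hreal
        _ = g k * ENNReal.ofReal
              (max (‖h^[k] y‖ ^ ((k:ℝ)⁻¹)) (‖h^[k] (-z)‖ ^ ((k:ℝ)⁻¹))) := by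
            rw [ENNReal.ofReal_mul (Real.rpow_nonneg (le_of_lt hc0) _)]
        _ = g k * max (F1 k) (F2 k) := by
            congr 1
            exact Monotone.map_max (fun _ _ hab => ENNReal.ofReal_le_ofReal hab)
    -- limsup estimates
    have hls1 : Filter.limsup (fun k : ℕ => ENNReal.ofReal (‖h^[k] x‖ ^ ((k : ℝ)⁻¹))) atTop ≤
        Filter.limsup (g * fun k => max (F1 k) (F2 k)) atTop :=
      Filter.limsup_le_limsup (Eventually.of_forall hptwise)
    have hls2 : Filter.limsup (g * fun k => max (F1 k) (F2 k)) atTop ≤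
        Filter.limsup g atTop *
          Filter.limsup (fun k => max (F1 k) (F2 k)) atTop := by
      apply ENNReal.limsup_mul_le'
      · left; rw [hlimsupg]; exact one_ne_zero
      · left; rw [hlimsupg]; exact ENNReal.one_ne_top
    have hls3 : Filter.limsup (fun k => max (F1 k) (F2 k)) atTop =
        max (Filter.limsup F1 atTop) (Filter.limsup F2 atTop) := limsup_max
    have hF1le : Filter.limsup F1 atTop ≤ coneSpectralRadius C h := by
      rw [coneSpectralRadius]
      exact le_iSup₂ (f := fun (u : X) (_ : u ∈ C) =>
        Filter.limsup (fun k : ℕ => ENNReal.ofReal (‖h^[k] u‖ ^ ((k : ℝ)⁻¹))) atTop) y hy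
    have hF2le : Filter.limsup F2 atTop ≤ coneSpectralRadius (-C) h := by
      rw [coneSpectralRadius]
      exact le_iSup₂ (f := fun (u : X) (_ : u ∈ -C) =>
        Filter.limsup (fun k : ℕ => ENNReal.ofReal (‖h^[k] u‖ ^ ((k : ℝ)⁻¹))) atTop)
        (-z) (Set.neg_mem_neg.mpr hz)
    calc Filter.limsup (fun k : ℕ => ENNReal.ofReal (‖h^[k] x‖ ^ ((k : ℝ)⁻¹))) atTop
        ≤ Filter.limsup g atTop *
            Filter.limsup (fun k => max (F1 k) (F2 k)) atTop := le_trans hls1 hls2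
      _ = max (Filter.limsup F1 atTop) (Filter.limsup F2 atTop) := by
          rw [hlimsupg, one_mul, hls3]
      _ ≤ max (coneSpectralRadius C h) (coneSpectralRadius (-C) h) :=
          max_le_max hF1le hF2le
  refine ⟨hmapsC, hmapsNC, main, ?_⟩
  apply le_antisymm
  · rw [coneSpectralRadius]
    exact iSup₂_le fun x _ => main x
  · apply max_le <;>
    · rw [coneSpectralRadius, coneSpectralRadius]
      exact iSup₂_le fun x hx => le_iSup₂ (f := fun (u : X) (_ : u ∈ Set.univ) =>
        Filter.limsup (fun k : ℕ => ENNReal.ofReal (‖h^[k] u‖ ^ ((k : ℝ)⁻¹))) atTop)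
        x (Set.mem_univ x)
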